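/- Let κ : S² × S² → ℝ be measurable with κ(Ω,Ω') = κ(Ω',Ω), κ(Ω,Ω') ≥ κ₀ for a constant κ₀ > 0, and ∫_{S²} κ(Ω,Ω') dσ(Ω') = 1 for every Ω ∈ S². Let b₁, …, b_m : S² → ℝ be bounded measurable functions that are orthonormal in L²(S², σ) (∫ b_i b_j dσ = δ_{ij}) and satisfy ∫_{S²} b_i dσ = 0 for each i. Define the matrix Σ ∈ ℝ^{m×m} by Σ_{ij} = ∫_{S²}∫_{S²} b_i(Ω) b_j(Ω') κ(Ω,Ω') dσ(Ω') dσ(Ω). Let σ_s ≥ 0 and σ_a ≥ 0 with σ_t := σ_s + σ_a > 0. Then for every c ∈ ℝ^m, cᵀ(σ_s Σ − σ_t I_m) c ≤ −(σ_a + 4π σ_s κ₀) ‖c‖²; in particular the matrix σ_s Σ − σ_t I_m is negative definite and hence invertible. -/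

import Mathlib

open MeasureTheory Metric
open scoped RealInnerProductSpace Real Matrix

noncomputable section

/-- Euclidean space `ℝ³`. -/
abbrev E3 : Type := EuclideanSpace ℝ (Fin 3)

/-- The unit sphere `S² ⊆ ℝ³`. -/
abbrev S2 : Type := Metric.sphere (0 : E3) 1

/-- The rotation-invariant surface measure `σ` on `S²` (total mass `4π`). -/
noncomputable def σS : Measure S2 := (volume : Measure E3).toSphere

instance : IsFiniteMeasure σS := by unfold σS; infer_instance

lemma sigS_univ : σS Set.univ = ENNReal.ofReal (4 * π) := by
  rw [σS, Measure.toSphere_apply_univ, EuclideanSpace.volume_ball]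
  have h5 : Real.Gamma ((Fintype.card (Fin 3) : ℝ) / 2 + 1) = 3 / 4 * Real.sqrt π := by
    have : ((Fintype.card (Fin 3) : ℝ) / 2 + 1) = 3/2 + 1 := by norm_num
    rw [this, Real.Gamma_add_one (by norm_num)]
    have : (3/2 : ℝ) = 1/2 + 1 := by norm_num
    rw [this, Real.Gamma_add_one (by norm_num), Real.Gamma_one_half_eq]
    ring
  rw [h5]
  have hs : Real.sqrt π ≠ 0 := by positivity
  have hval : Real.sqrt π ^ Fintype.card (Fin 3) / (3 / 4 * Real.sqrt π) = 4 / 3 * π := by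
    have h2 : Real.sqrt π ^ 2 = π := Real.sq_sqrt Real.pi_nonneg
    simp only [Fintype.card_fin]
    field_simp
    nlinarith [Real.sqrt_nonneg π]
  rw [hval]
  have : (4 : ℝ) * π = 3 * (4 / 3 * π) := by ring
  rw [this, ENNReal.ofReal_mul (by norm_num), ENNReal.ofReal_mul (by norm_num)]
  simp [finrank_euclideanSpace_fin, nsmul_eq_mul]
  rw [show (3:ENNReal) = ENNReal.ofReal 3 by simp]
  rw [← ENNReal.ofReal_mul (by norm_num), ← ENNReal.ofReal_mul (by norm_num)]

lemma sigS_univ_toReal : (σS Set.univ).toReal = 4 * π := by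
  rw [sigS_univ]; exact ENNReal.toReal_ofReal (by positivity)

/-- A bounded a.e.-strongly-measurable function is integrable w.r.t. a finite measure. -/
lemma integrable_of_bdd {α : Type*} [MeasurableSpace α] {μ : Measure α} [IsFiniteMeasure μ]
    {u : α → ℝ} (hu : AEStronglyMeasurable u μ) {C : ℝ} (hC : ∀ x, |u x| ≤ C) :
    Integrable u μ :=
  (integrable_const C).mono' hu
    (Filter.Eventually.of_forall fun x => by simpa [Real.norm_eq_abs] using hC x)

/-- Invertibility of the odd-odd block `C_oo = σ_s Σ_oo − σ_t E`: for a symmetric kernel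
`κ ≥ κ₀ > 0` with `∫ κ(Ω,·) dσ = 1`, bounded measurable orthonormal mean-zero functions
`b₁,…,b_m` on `S²`, and `σ_s, σ_a ≥ 0` with `σ_t = σ_s + σ_a > 0`, the matrix
`σ_s Σ − σ_t I` satisfies `cᵀ(σ_s Σ − σ_t I)c ≤ −(σ_a + 4π σ_s κ₀)‖c‖²` for all `c`,
so it is negative definite and hence invertible. -/
theorem Coo_negDef_invertible {m : ℕ}
    (κ : S2 → S2 → ℝ) (κ₀ : ℝ) (hκmeas : Measurable (Function.uncurry κ))
    (hκsym : ∀ Ω Ω' : S2, κ Ω Ω' = κ Ω' Ω)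
    (hκ₀pos : 0 < κ₀) (hκlb : ∀ Ω Ω' : S2, κ₀ ≤ κ Ω Ω')
    (hκnorm : ∀ Ω : S2, ∫ Ω', κ Ω Ω' ∂σS = 1)
    (b : Fin m → S2 → ℝ)
    (hbmeas : ∀ i, Measurable (b i))
    (hbbd : ∀ i, ∃ C : ℝ, ∀ x : S2, |b i x| ≤ C)
    (hortho : ∀ i j, ∫ x, b i x * b j x ∂σS = if i = j then (1 : ℝ) else 0)
    (hmean : ∀ i, ∫ x, b i x ∂σS = 0)
    (Sig : Matrix (Fin m) (Fin m) ℝ)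
    (hSig : ∀ i j, Sig i j = ∫ Ω, (∫ Ω', b i Ω * b j Ω' * κ Ω Ω' ∂σS) ∂σS)
    (σs σa : ℝ) (hσs : 0 ≤ σs) (hσa : 0 ≤ σa) (hσt : 0 < σs + σa) :
    (∀ c : Fin m → ℝ,
        c ⬝ᵥ ((σs • Sig - (σs + σa) • (1 : Matrix (Fin m) (Fin m) ℝ)) *ᵥ c)
          ≤ -(σa + 4 * π * σs * κ₀) * ∑ i, c i ^ 2)
      ∧ IsUnit (σs • Sig - (σs + σa) • (1 : Matrix (Fin m) (Fin m) ℝ)) := by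
  classical
  set M : Matrix (Fin m) (Fin m) ℝ :=
    σs • Sig - (σs + σa) • (1 : Matrix (Fin m) (Fin m) ℝ) with hM
  -- basic facts about κ
  have hκnn : ∀ Ω Ω', 0 ≤ κ Ω Ω' := fun Ω Ω' => hκ₀pos.le.trans (hκlb Ω Ω')
  have hκΩmeas : ∀ Ω, Measurable (κ Ω) := fun Ω => hκmeas.of_uncurry_left
  have hκint : ∀ Ω, Integrable (κ Ω) σS := by
    intro Ω
    by_contra h
    have h1 := hκnorm Ω
    rw [integral_undef h] at h1
    norm_num at h1
  -- uncurry κ is integrable on the product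
  have hκuncmeas : Measurable fun p : S2 × S2 => κ p.1 p.2 := hκmeas
  have hκuncint : Integrable (fun p : S2 × S2 => κ p.1 p.2) (σS.prod σS) := by
    refine ⟨hκuncmeas.aestronglyMeasurable, ?_⟩
    rw [HasFiniteIntegral]
    rw [lintegral_prod _ (hκuncmeas.enorm.aemeasurable)]
    have hinner : ∀ Ω : S2, ∫⁻ Ω', ‖κ Ω Ω'‖ₑ ∂σS = ENNReal.ofReal 1 := by
      intro Ω
      calc ∫⁻ Ω', ‖κ Ω Ω'‖ₑ ∂σS
          = ∫⁻ Ω', ENNReal.ofReal (κ Ω Ω') ∂σS :=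
            lintegral_congr fun x => Real.enorm_eq_ofReal (hκnn Ω x)
        _ = ENNReal.ofReal (∫ Ω', κ Ω Ω' ∂σS) :=
            (ofReal_integral_eq_lintegral_ofReal (hκint Ω)
              (Filter.Eventually.of_forall fun x => hκnn Ω x)).symm
        _ = ENNReal.ofReal 1 := by rw [hκnorm Ω]
    simp only [hinner]
    rw [lintegral_const]
    exact ENNReal.mul_lt_top (by simp) (measure_lt_top _ _)
  -- bounds for the b i
  choose Cb hCb using hbbd
  have hbint : ∀ i, Integrable (b i) σS :=
    fun i => integrable_of_bdd (hbmeas i).aestronglyMeasurable (hCb i)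
  -- product integrability for bounded u, v
  have key_int : ∀ (u v : S2 → ℝ), Measurable u → Measurable v →
      ∀ (Cu Cv : ℝ), (∀ x, |u x| ≤ Cu) → (∀ x, |v x| ≤ Cv) →
      Integrable (fun p : S2 × S2 => u p.1 * v p.2 * κ p.1 p.2) (σS.prod σS) := by
    intro u v hu hv Cu Cv hCu hCv
    obtain ⟨x₀⟩ : Nonempty S2 := by
      rcases (NormedSpace.sphere_nonempty (E := E3) (x := 0) (r := 1)).2 zero_le_one with ⟨x, hx⟩
      exact ⟨⟨x, hx⟩⟩
    have hCu0 : 0 ≤ Cu := (abs_nonneg _).trans (hCu x₀)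
    have hCv0 : 0 ≤ Cv := (abs_nonneg _).trans (hCv x₀)
    refine (hκuncint.const_mul (Cu * Cv)).mono'
      (((hu.comp measurable_fst).mul (hv.comp measurable_snd)).mul
        hκuncmeas).aestronglyMeasurable ?_
    refine Filter.Eventually.of_forall fun p => ?_
    have h1 : |u p.1 * v p.2 * κ p.1 p.2| ≤ Cu * Cv * κ p.1 p.2 := by
      rw [abs_mul, abs_mul, abs_of_nonneg (hκnn _ _)]
      have := mul_le_mul (hCu p.1) (hCv p.2) (abs_nonneg _) hCu0
      exact mul_le_mul_of_nonneg_right this (hκnn _ _)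
    rw [Real.norm_eq_abs]; exact h1
  -- product integrability for bounded u, v against κ - κ₀
  have key_int' : ∀ (u v : S2 → ℝ), Measurable u → Measurable v →
      ∀ (Cu Cv : ℝ), (∀ x, |u x| ≤ Cu) → (∀ x, |v x| ≤ Cv) →
      Integrable (fun p : S2 × S2 => u p.1 * v p.2 * (κ p.1 p.2 - κ₀)) (σS.prod σS) := by
    intro u v hu hv Cu Cv hCu hCv
    have h1 := key_int u v hu hv Cu Cv hCu hCv
    have h2 : Integrable (fun p : S2 × S2 => u p.1 * v p.2 * κ₀) (σS.prod σS) := by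
      refine integrable_of_bdd
        (((hu.comp measurable_fst).mul (hv.comp measurable_snd)).mul
          measurable_const).aestronglyMeasurable (C := Cu * Cv * |κ₀|) fun p => ?_
      rw [abs_mul, abs_mul]
      have hCu0 : 0 ≤ Cu := (abs_nonneg _).trans (hCu p.1)
      exact mul_le_mul_of_nonneg_right
        (mul_le_mul (hCu p.1) (hCv p.2) (abs_nonneg _) hCu0) (abs_nonneg _)
    have : (fun p : S2 × S2 => u p.1 * v p.2 * (κ p.1 p.2 - κ₀))
        = fun p => u p.1 * v p.2 * κ p.1 p.2 - u p.1 * v p.2 * κ₀ := by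
      funext p; ring
    rw [this]
    exact h1.sub h2
  -- Σ entries as product integrals
  have hSigProd : ∀ i j, Sig i j
      = ∫ p : S2 × S2, b i p.1 * b j p.2 * κ p.1 p.2 ∂(σS.prod σS) := by
    intro i j
    rw [hSig i j, ← integral_prod _ (key_int _ _ (hbmeas i) (hbmeas j) _ _ (hCb i) (hCb j))]
  have key : ∀ c : Fin m → ℝ,
      c ⬝ᵥ (M *ᵥ c) ≤ -(σa + 4 * π * σs * κ₀) * ∑ i, c i ^ 2 := by
    intro c
    -- the function f
    set f : S2 → ℝ := fun Ω => ∑ i, c i * b i Ω with hf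
    have hfmeas : Measurable f := Finset.measurable_sum _ fun i _ => (hbmeas i).const_mul _
    set Cf : ℝ := ∑ i, |c i| * Cb i with hCf
    have hfbd : ∀ x, |f x| ≤ Cf := by
      intro x
      refine (Finset.abs_sum_le_sum_abs _ _).trans ?_
      refine Finset.sum_le_sum fun i _ => ?_
      rw [abs_mul]
      exact mul_le_mul_of_nonneg_left (hCb i x) (abs_nonneg _)
    have hfint : Integrable f σS := integrable_of_bdd hfmeas.aestronglyMeasurable hfbd
    -- mean zero
    have hf0 : ∫ x, f x ∂σS = 0 := by
      rw [hf, integral_finset_sum _ fun i _ => (hbint i).const_mul _]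
      simp [integral_const_mul, hmean]
    -- ∫ f² = ∑ cᵢ²
    have hf2 : ∫ x, f x ^ 2 ∂σS = ∑ i, c i ^ 2 := by
      have hexp : ∀ x : S2, f x ^ 2 = ∑ i, ∑ j, c i * c j * (b i x * b j x) := by
        intro x
        rw [hf, sq, Finset.sum_mul_sum]
        exact Finset.sum_congr rfl fun i _ => Finset.sum_congr rfl fun j _ => by ring
      simp_rw [hexp]
      have hint2 : ∀ (i j : Fin m),
          Integrable (fun x => c i * c j * (b i x * b j x)) σS := by
        intro i j
        exact (integrable_of_bdd ((hbmeas i).mul (hbmeas j)).aestronglyMeasurable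
          (C := Cb i * Cb j) fun x => by
            rw [Pi.mul_apply, abs_mul]
            exact mul_le_mul (hCb i x) (hCb j x) (abs_nonneg _)
              ((abs_nonneg _).trans (hCb i x))).const_mul _
      rw [integral_finset_sum _ fun i _ => integrable_finset_sum _ fun j _ => hint2 i j]
      have : ∀ i : Fin m, ∫ x, ∑ j, c i * c j * (b i x * b j x) ∂σS
          = ∑ j, c i * c j * (if i = j then (1:ℝ) else 0) := by
        intro i
        rw [integral_finset_sum _ fun j _ => hint2 i j]
        exact Finset.sum_congr rfl fun j _ => by rw [integral_const_mul, hortho i j]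
      simp_rw [this]
      simp [Finset.sum_ite_eq, sq]
    -- the quadratic form of Σ
    set Q : ℝ := ∫ p : S2 × S2, f p.1 * f p.2 * κ p.1 p.2 ∂(σS.prod σS) with hQ
    have hQexp : Q = ∑ i, ∑ j, c i * c j * Sig i j := by
      have hexp : ∀ p : S2 × S2, f p.1 * f p.2 * κ p.1 p.2
          = ∑ i, ∑ j, c i * c j * (b i p.1 * b j p.2 * κ p.1 p.2) := by
        intro p
        rw [hf, Finset.sum_mul_sum, Finset.sum_mul]
        refine Finset.sum_congr rfl fun i _ => ?_
        rw [Finset.sum_mul]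
        exact Finset.sum_congr rfl fun j _ => by ring
      have hijint : ∀ (i j : Fin m), Integrable
          (fun p : S2 × S2 => c i * c j * (b i p.1 * b j p.2 * κ p.1 p.2)) (σS.prod σS) :=
        fun i j => (key_int _ _ (hbmeas i) (hbmeas j) _ _ (hCb i) (hCb j)).const_mul _
      rw [hQ]
      simp_rw [hexp]
      rw [integral_finset_sum _ fun i _ => integrable_finset_sum _ fun j _ => hijint i j]
      refine Finset.sum_congr rfl fun i _ => ?_
      rw [integral_finset_sum _ fun j _ => hijint i j]
      refine Finset.sum_congr rfl fun j _ => ?_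
      rw [integral_const_mul, hSigProd i j]
    -- split Q into the κ₀ part and the rest
    have hsplit : Q = κ₀ * ((∫ x, f x ∂σS) * (∫ x, f x ∂σS))
        + ∫ p : S2 × S2, f p.1 * f p.2 * (κ p.1 p.2 - κ₀) ∂(σS.prod σS) := by
      have h1 : Integrable (fun p : S2 × S2 => κ₀ * (f p.1 * f p.2)) (σS.prod σS) := by
        refine integrable_of_bdd
          (((hfmeas.comp measurable_fst).mul (hfmeas.comp measurable_snd)).const_mul
            κ₀).aestronglyMeasurable (C := |κ₀| * (Cf * Cf)) fun p => ?_
        rw [abs_mul, abs_mul]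
        refine mul_le_mul_of_nonneg_left ?_ (abs_nonneg _)
        exact mul_le_mul (hfbd p.1) (hfbd p.2) (abs_nonneg _) ((abs_nonneg _).trans (hfbd p.1))
      have h2 := key_int' f f hfmeas hfmeas Cf Cf hfbd hfbd
      have heq : (fun p : S2 × S2 => f p.1 * f p.2 * κ p.1 p.2)
          = fun p => κ₀ * (f p.1 * f p.2) + f p.1 * f p.2 * (κ p.1 p.2 - κ₀) := by
        funext p; ring
      rw [hQ, heq, integral_add h1 h2, integral_const_mul, integral_prod_mul]
    -- the AM-GM bound on the second part
    have hbound : ∫ p : S2 × S2, f p.1 * f p.2 * (κ p.1 p.2 - κ₀) ∂(σS.prod σS)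
        ≤ ∫ p : S2 × S2, f p.1 ^ 2 * (κ p.1 p.2 - κ₀) ∂(σS.prod σS) := by
      have hsqbd : ∀ x : S2, |f x ^ 2| ≤ Cf * Cf := by
        intro x
        rw [sq, abs_mul]
        exact mul_le_mul (hfbd x) (hfbd x) (abs_nonneg _) ((abs_nonneg _).trans (hfbd x))
      have hint1 := key_int' f f hfmeas hfmeas Cf Cf hfbd hfbd
      have hint2 := key_int' (fun x => f x ^ 2) (fun _ => 1) (hfmeas.pow_const 2)
        measurable_const (Cf * Cf) 1 hsqbd (fun _ => by norm_num)
      have hint2' : Integrable (fun p : S2 × S2 => f p.1 ^ 2 * (κ p.1 p.2 - κ₀))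
          (σS.prod σS) := by simpa using hint2
      have hint3 := key_int' (fun _ => 1) (fun x => f x ^ 2) measurable_const
        (hfmeas.pow_const 2) 1 (Cf * Cf) (fun _ => by norm_num) hsqbd
      have hint3' : Integrable (fun p : S2 × S2 => f p.2 ^ 2 * (κ p.1 p.2 - κ₀))
          (σS.prod σS) := by simpa using hint3
      have hswap : ∫ p : S2 × S2, f p.2 ^ 2 * (κ p.1 p.2 - κ₀) ∂(σS.prod σS)
          = ∫ p : S2 × S2, f p.1 ^ 2 * (κ p.1 p.2 - κ₀) ∂(σS.prod σS) := by
        rw [← integral_prod_swap (fun p : S2 × S2 => f p.1 ^ 2 * (κ p.1 p.2 - κ₀))]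
        refine integral_congr_ae (Filter.Eventually.of_forall fun p => ?_)
        simp only [Prod.fst_swap, Prod.snd_swap]
        rw [hκsym]
      have hmono : ∫ p : S2 × S2, f p.1 * f p.2 * (κ p.1 p.2 - κ₀) ∂(σS.prod σS)
          ≤ ∫ p : S2 × S2,
              (f p.1 ^ 2 * (κ p.1 p.2 - κ₀) + f p.2 ^ 2 * (κ p.1 p.2 - κ₀)) / 2
            ∂(σS.prod σS) := by
        refine integral_mono hint1 ((hint2'.add hint3').div_const 2) fun p => ?_
        have hk : 0 ≤ κ p.1 p.2 - κ₀ := sub_nonneg.2 (hκlb _ _)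
        nlinarith [sq_nonneg (f p.1 - f p.2), sq_nonneg (f p.1 + f p.2)]
      refine hmono.trans_eq ?_
      rw [integral_div, integral_add hint2' hint3', hswap]
      ring
    -- evaluate the dominating integral
    have hEval : ∫ p : S2 × S2, f p.1 ^ 2 * (κ p.1 p.2 - κ₀) ∂(σS.prod σS)
        = (1 - 4 * π * κ₀) * ∑ i, c i ^ 2 := by
      have hsqbd : ∀ x : S2, |f x ^ 2| ≤ Cf * Cf := by
        intro x
        rw [sq, abs_mul]
        exact mul_le_mul (hfbd x) (hfbd x) (abs_nonneg _) ((abs_nonneg _).trans (hfbd x))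
      have hint2 := key_int' (fun x => f x ^ 2) (fun _ => 1) (hfmeas.pow_const 2)
        measurable_const (Cf * Cf) 1 hsqbd (fun _ => by norm_num)
      have hint2' : Integrable (fun p : S2 × S2 => f p.1 ^ 2 * (κ p.1 p.2 - κ₀))
          (σS.prod σS) := by simpa using hint2
      rw [integral_prod _ hint2']
      have hin : ∀ Ω : S2, ∫ Ω', f Ω ^ 2 * (κ Ω Ω' - κ₀) ∂σS
          = f Ω ^ 2 * (1 - 4 * π * κ₀) := by
        intro Ω
        rw [integral_const_mul, integral_sub (hκint Ω) (integrable_const _), hκnorm Ω,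
          integral_const, measureReal_def, sigS_univ_toReal, smul_eq_mul]
      simp_rw [hin]
      rw [integral_mul_const, hf2]
      ring
    -- combine
    have hQle : Q ≤ (1 - 4 * π * κ₀) * ∑ i, c i ^ 2 := by
      rw [hsplit, hf0]
      simpa using hbound.trans_eq hEval
    -- expand the quadratic form
    have hquad : c ⬝ᵥ (M *ᵥ c)
        = σs * (∑ i, ∑ j, c i * c j * Sig i j) - (σs + σa) * ∑ i, c i ^ 2 := by
      rw [hM]
      simp only [dotProduct, Matrix.mulVec, Matrix.sub_apply, Matrix.smul_apply,
        Matrix.one_apply, smul_eq_mul, mul_ite, mul_one, mul_zero, ite_mul, zero_mul]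
      rw [Finset.mul_sum, Finset.mul_sum, ← Finset.sum_sub_distrib]
      refine Finset.sum_congr rfl fun i _ => ?_
      rw [Finset.mul_sum]
      have hj : ∀ j : Fin m, c i * ((σs * Sig i j - if i = j then σs + σa else 0) * c j)
          = σs * (c i * c j * Sig i j) - (if i = j then (σs + σa) * (c i * c j) else 0) := by
        intro j; split <;> ring
      simp_rw [hj]
      rw [Finset.sum_sub_distrib, ← Finset.mul_sum, Finset.sum_ite_eq]
      simp only [Finset.mem_univ, if_true]
      rw [sq]
    rw [hquad, ← hQexp]
    have hS0 : (0:ℝ) ≤ ∑ i, c i ^ 2 := Finset.sum_nonneg fun i _ => sq_nonneg _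
    nlinarith [mul_le_mul_of_nonneg_left hQle hσs]
  refine ⟨key, ?_⟩
  rw [Matrix.isUnit_iff_isUnit_det, isUnit_iff_ne_zero]
  intro hdet
  obtain ⟨v, hv0, hv⟩ := Matrix.exists_mulVec_eq_zero_iff.2 hdet
  have h1 := key v
  rw [hv] at h1
  simp only [dotProduct_zero] at h1
  have hSpos : 0 < ∑ i, v i ^ 2 := by
    obtain ⟨i, hi⟩ := Function.ne_iff.1 hv0
    exact Finset.sum_pos' (fun j _ => sq_nonneg _)
      ⟨i, Finset.mem_univ i, pow_two_pos_of_ne_zero hi⟩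
  have hcoef : 0 < σa + 4 * π * σs * κ₀ := by
    have h4 : 0 ≤ 4 * π * σs * κ₀ :=
      mul_nonneg (mul_nonneg (by positivity) hσs) hκ₀pos.le
    rcases hσa.lt_or_eq with h | h
    · linarith
    · have hσspos : 0 < σs := by linarith
      have h5 : 0 < 4 * π * σs * κ₀ :=
        mul_pos (mul_pos (by positivity) hσspos) hκ₀pos
      linarith
  nlinarith [mul_pos hcoef hSpos]
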